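/- Let α, β, γ, δ ∈ (0, π) be elliptic with M = (sin α sin β sin γ sin δ)/(sin ᾱ sin β̄ sin γ̄ sin δ̄) > 0, and let r = (sin α sin δ)/(sin ᾱ sin δ̄). Then r > 0 and (r − 1)(r − M) > 0; that is, r ∈ (0, min(1,M)) ∪ (max(1,M), ∞). -/

import Mathlib

open Real

def Elliptic (α β γ δ : ℝ) : Prop :=
  ∀ e₁ e₂ e₃ : ℝ, (e₁ = 1 ∨ e₁ = -1) → (e₂ = 1 ∨ e₂ = -1) → (e₃ = 1 ∨ e₃ = -1) →
    ∀ n : ℤ, α + e₁ * β + e₂ * γ + e₃ * δ ≠ 2 * Real.pi * n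

lemma sin_mul_sin' (x y : ℝ) :
    Real.sin x * Real.sin y = (Real.cos (x - y) - Real.cos (x + y)) / 2 := by
  rw [Real.cos_sub, Real.cos_add]; ring

lemma not_both_neg (s x y : ℝ) (hx0 : 0 < x) (hx : x < Real.pi)
    (hy0 : 0 < y) (hy : y < Real.pi)
    (h1 : 0 < 2 * s - x - y) (h2 : 2 * s - x - y < 2 * Real.pi) :
    ¬ (Real.sin (s - x) < 0 ∧ Real.sin (s - y) < 0) := by
  rintro ⟨ha, hb⟩
  have Ha : s - x < 0 ∨ Real.pi < s - x := by
    by_contra h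
    push_neg at h
    exact absurd (Real.sin_nonneg_of_nonneg_of_le_pi h.1 h.2) (not_le.mpr ha)
  have Hb : s - y < 0 ∨ Real.pi < s - y := by
    by_contra h
    push_neg at h
    exact absurd (Real.sin_nonneg_of_nonneg_of_le_pi h.1 h.2) (not_le.mpr hb)
  have hπ := Real.pi_pos
  rcases Ha with Ha | Ha <;> rcases Hb with Hb | Hb <;> linarith

set_option maxHeartbeats 1600000 in
theorem amplitude_inequality (α β γ δ : ℝ)
    (hα : α ∈ Set.Ioo 0 Real.pi) (hβ : β ∈ Set.Ioo 0 Real.pi)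
    (hγ : γ ∈ Set.Ioo 0 Real.pi) (hδ : δ ∈ Set.Ioo 0 Real.pi)
    (hell : Elliptic α β γ δ)
    (σ : ℝ) (hσ : σ = (α + β + γ + δ) / 2)
    (M : ℝ)
    (hMdef : M = (Real.sin α * Real.sin β * Real.sin γ * Real.sin δ) /
        (Real.sin (σ - α) * Real.sin (σ - β) * Real.sin (σ - γ) * Real.sin (σ - δ)))
    (hM : M > 0)
    (r : ℝ)
    (hrdef : r = (Real.sin α * Real.sin δ) / (Real.sin (σ - α) * Real.sin (σ - δ))) :
    r > 0 ∧ (r - 1) * (r - M) > 0 ∧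
      r ∈ Set.Ioo 0 (min 1 M) ∪ Set.Ioi (max 1 M) := by
  obtain ⟨hα0, hα1⟩ := hα
  obtain ⟨hβ0, hβ1⟩ := hβ
  obtain ⟨hγ0, hγ1⟩ := hγ
  obtain ⟨hδ0, hδ1⟩ := hδ
  have hsα := Real.sin_pos_of_pos_of_lt_pi hα0 hα1
  have hsβ := Real.sin_pos_of_pos_of_lt_pi hβ0 hβ1
  have hsγ := Real.sin_pos_of_pos_of_lt_pi hγ0 hγ1
  have hsδ := Real.sin_pos_of_pos_of_lt_pi hδ0 hδ1
  -- nonvanishing of the four shifted sines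
  have tα : Real.sin (σ - α) ≠ 0 := by
    intro h
    obtain ⟨n, hn⟩ := Real.sin_eq_zero_iff.mp h
    exact hell (-1) (-1) (-1) (Or.inr rfl) (Or.inr rfl) (Or.inr rfl) (-n)
      (by push_cast; linear_combination 2 * hn + 2 * hσ)
  have tβ : Real.sin (σ - β) ≠ 0 := by
    intro h
    obtain ⟨n, hn⟩ := Real.sin_eq_zero_iff.mp h
    exact hell (-1) 1 1 (Or.inr rfl) (Or.inl rfl) (Or.inl rfl) n
      (by push_cast; linear_combination -2 * hn - 2 * hσ)
  have tγ : Real.sin (σ - γ) ≠ 0 := by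
    intro h
    obtain ⟨n, hn⟩ := Real.sin_eq_zero_iff.mp h
    exact hell 1 (-1) 1 (Or.inl rfl) (Or.inr rfl) (Or.inl rfl) n
      (by push_cast; linear_combination -2 * hn - 2 * hσ)
  have tδ : Real.sin (σ - δ) ≠ 0 := by
    intro h
    obtain ⟨n, hn⟩ := Real.sin_eq_zero_iff.mp h
    exact hell 1 1 (-1) (Or.inl rfl) (Or.inl rfl) (Or.inr rfl) n
      (by push_cast; linear_combination -2 * hn - 2 * hσ)
  -- positivity of the denominator product
  have hNum : 0 < Real.sin α * Real.sin β * Real.sin γ * Real.sin δ := by positivity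
  have hDen : 0 < Real.sin (σ - α) * Real.sin (σ - β) * Real.sin (σ - γ) * Real.sin (σ - δ) := by
    have hDne : Real.sin (σ - α) * Real.sin (σ - β) * Real.sin (σ - γ) * Real.sin (σ - δ) ≠ 0 := by
      simp [tα, tβ, tγ, tδ]
    rcases hDne.lt_or_gt with h | h
    · exfalso
      have : M < 0 := by
        rw [hMdef]; exact div_neg_of_pos_of_neg hNum h
      linarith
    · exact h
  -- at most one of the shifted sines is negative ⇒ all positive
  have pair : ∀ x y : ℝ, 0 < x → x < Real.pi → 0 < y → y < Real.pi →
      0 < 2 * σ - x - y → 2 * σ - x - y < 2 * Real.pi →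
      ¬ (Real.sin (σ - x) < 0 ∧ Real.sin (σ - y) < 0) := fun x y a b c d e f =>
    not_both_neg σ x y a b c d e f
  have hπ := Real.pi_pos
  have nβγ := pair β γ hβ0 hβ1 hγ0 hγ1 (by linarith) (by linarith)
  have nβδ := pair β δ hβ0 hβ1 hδ0 hδ1 (by linarith) (by linarith)
  have nγδ := pair γ δ hγ0 hγ1 hδ0 hδ1 (by linarith) (by linarith)
  have nαβ := pair α β hα0 hα1 hβ0 hβ1 (by linarith) (by linarith)
  have nαγ := pair α γ hα0 hα1 hγ0 hγ1 (by linarith) (by linarith)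
  have nαδ := pair α δ hα0 hα1 hδ0 hδ1 (by linarith) (by linarith)
  have tαpos : 0 < Real.sin (σ - α) := by
    by_contra h
    push_neg at h
    have hαneg : Real.sin (σ - α) < 0 := lt_of_le_of_ne h tα
    have hb : 0 < Real.sin (σ - β) :=
      lt_of_le_of_ne (not_lt.mp fun hb => nαβ ⟨hαneg, hb⟩) (Ne.symm tβ)
    have hc : 0 < Real.sin (σ - γ) :=
      lt_of_le_of_ne (not_lt.mp fun hc => nαγ ⟨hαneg, hc⟩) (Ne.symm tγ)
    have hd : 0 < Real.sin (σ - δ) :=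
      lt_of_le_of_ne (not_lt.mp fun hd => nαδ ⟨hαneg, hd⟩) (Ne.symm tδ)
    nlinarith [mul_pos (mul_pos hb hc) hd, hDen]
  have tβpos : 0 < Real.sin (σ - β) := by
    by_contra h
    push_neg at h
    have hneg : Real.sin (σ - β) < 0 := lt_of_le_of_ne h tβ
    have hc : 0 < Real.sin (σ - γ) :=
      lt_of_le_of_ne (not_lt.mp fun hc => nβγ ⟨hneg, hc⟩) (Ne.symm tγ)
    have hd : 0 < Real.sin (σ - δ) :=
      lt_of_le_of_ne (not_lt.mp fun hd => nβδ ⟨hneg, hd⟩) (Ne.symm tδ)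
    nlinarith [mul_pos (mul_pos tαpos hc) hd, hDen]
  have tγpos : 0 < Real.sin (σ - γ) := by
    by_contra h
    push_neg at h
    have hneg : Real.sin (σ - γ) < 0 := lt_of_le_of_ne h tγ
    have hd : 0 < Real.sin (σ - δ) :=
      lt_of_le_of_ne (not_lt.mp fun hd => nγδ ⟨hneg, hd⟩) (Ne.symm tδ)
    nlinarith [mul_pos (mul_pos tαpos tβpos) hd, hDen]
  have tδpos : 0 < Real.sin (σ - δ) := by
    by_contra h
    push_neg at h
    have hneg : Real.sin (σ - δ) < 0 := lt_of_le_of_ne h tδ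
    nlinarith [mul_pos (mul_pos tαpos tβpos) tγpos, hDen]
  -- abbreviations
  set P := Real.sin α * Real.sin δ with hPdef
  set Q := Real.sin (σ - α) * Real.sin (σ - δ) with hQdef
  set R := Real.sin β * Real.sin γ with hRdef
  set S := Real.sin (σ - β) * Real.sin (σ - γ) with hSdef
  have hPpos : 0 < P := mul_pos hsα hsδ
  have hQpos : 0 < Q := mul_pos tαpos tδpos
  have hRpos : 0 < R := mul_pos hsβ hsγ
  have hSpos : 0 < S := mul_pos tβpos tγpos
  -- key trig identities
  have hPQ : P - Q = (Real.cos (β + γ) - Real.cos (α + δ)) / 2 := by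
    rw [hPdef, hQdef, sin_mul_sin', sin_mul_sin',
      show σ - α - (σ - δ) = -(α - δ) by ring, Real.cos_neg,
      show σ - α + (σ - δ) = β + γ by linarith]
    ring
  have hRS : R - S = (Real.cos (α + δ) - Real.cos (β + γ)) / 2 := by
    rw [hRdef, hSdef, sin_mul_sin', sin_mul_sin',
      show σ - β - (σ - γ) = -(β - γ) by ring, Real.cos_neg,
      show σ - β + (σ - γ) = α + δ by linarith]
    ring
  have hcc : Real.cos (β + γ) - Real.cos (α + δ)
      = -2 * Real.sin σ * Real.sin ((β + γ - α - δ) / 2) := by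
    rw [Real.cos_sub_cos, show (β + γ + (α + δ)) / 2 = σ by linarith,
      show (β + γ - (α + δ)) / 2 = (β + γ - α - δ) / 2 by ring]
  have hsσ : Real.sin σ ≠ 0 := by
    intro h
    obtain ⟨n, hn⟩ := Real.sin_eq_zero_iff.mp h
    exact hell 1 1 1 (Or.inl rfl) (Or.inl rfl) (Or.inl rfl) n
      (by push_cast; linear_combination -2 * hn - 2 * hσ)
  have hsw : Real.sin ((β + γ - α - δ) / 2) ≠ 0 := by
    intro h
    obtain ⟨n, hn⟩ := Real.sin_eq_zero_iff.mp h
    exact hell (-1) (-1) 1 (Or.inr rfl) (Or.inr rfl) (Or.inl rfl) (-n)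
      (by push_cast; linear_combination 2 * hn)
  have hdne : P - Q ≠ 0 := by
    rw [hPQ, hcc]
    intro h
    have := mul_ne_zero hsσ hsw
    apply this
    linarith [h]
  -- algebraic consequences
  have hM' : M = P * R / (Q * S) := by rw [hMdef, hPdef, hQdef, hRdef, hSdef]; congr 1 <;> ring
  have hr' : r = P / Q := hrdef
  clear_value P Q R S
  have hrpos : r > 0 := by rw [hr']; exact div_pos hPpos hQpos
  have hSR : S - R = P - Q := by linarith [hPQ, hRS]
  have h1 : r - 1 = (P - Q) / Q := by rw [hr']; field_simp
  have h2 : r - M = P * (S - R) / (Q * S) := by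
    rw [hr', hM']
    field_simp
  have hkey : (r - 1) * (r - M) = P * (P - Q) ^ 2 / (Q ^ 2 * S) := by
    rw [h1, h2, hSR]
    field_simp
  have hd2 : 0 < (P - Q) ^ 2 := lt_of_le_of_ne (sq_nonneg _) (Ne.symm (pow_ne_zero 2 hdne))
  have hprod : (r - 1) * (r - M) > 0 := by
    rw [hkey]
    apply div_pos (mul_pos hPpos hd2) (by positivity)
  refine ⟨hrpos, hprod, ?_⟩
  rcases mul_pos_iff.mp hprod with ⟨ha, hb⟩ | ⟨ha, hb⟩
  · right
    simp only [Set.mem_Ioi]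
    exact max_lt (by linarith) (by linarith)
  · left
    simp only [Set.mem_Ioo]
    exact ⟨hrpos, lt_min (by linarith) (by linarith)⟩
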